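/- Fix r, p ∈ ℤ with r < p, β > 0, and a, b ∈ ℝ with a ≠ 0. Let Ω_{r,p} = { ±Σ_{i=r}^{p-1} q_i 2^i : q_i ∈ {0,1} } and let B(β, Ω_{r,p}, H) denote the Boltzmann distribution on Ω_{r,p} with weights proportional to e^{-β² H(x)} for H(x) = (ax - b)². Then as p → +∞ and r → -∞, the distributions B(β, Ω_{r,p}, (ax-b)²) converge in distribution to the normal law N(b/a, 1/(2a²β²)). -/

import Mathlib

open MeasureTheory ProbabilityTheory Filter
open Set


lemma two_zpow_eq_exp (n : ℤ) : (2:ℝ)^n = Real.exp (Real.log 2 * n) := by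
  rw [← Real.rpow_intCast, Real.rpow_def_of_pos (by norm_num)]

lemma tendsto_two_zpow_atBot : Filter.Tendsto (fun n : ℤ => (2:ℝ)^n) Filter.atBot (nhds 0) := by
  simp only [two_zpow_eq_exp]
  apply Real.tendsto_exp_atBot.comp
  exact (tendsto_intCast_atBot_iff.mpr Filter.tendsto_id).const_mul_atBot (by positivity)

lemma tendsto_two_zpow_atTop : Filter.Tendsto (fun n : ℤ => (2:ℝ)^n) Filter.atTop Filter.atTop := by
  simp only [two_zpow_eq_exp]
  apply Real.tendsto_exp_atTop.comp
  exact tendsto_intCast_atTop_atTop.const_mul_atTop (by positivity)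

open scoped Classical in
/-- The set `Ω_{r,p} = { ±Σ_{i=r}^{p-1} q_i 2^i : q_i ∈ {0,1} }`. -/
noncomputable def omegaSet (r p : ℤ) : Finset ℝ :=
  ((Finset.Icc r (p - 1)).powerset.image fun S => ∑ i ∈ S, (2 : ℝ) ^ i) ∪
    ((Finset.Icc r (p - 1)).powerset.image fun S => -∑ i ∈ S, (2 : ℝ) ^ i)

lemma sum_range_two_pow (N : ℕ) : ∑ i ∈ Finset.range N, 2^i = 2^N - 1 := by
  induction N with
  | zero => simp
  | succ n ih =>
    rw [Finset.sum_range_succ, ih, pow_succ]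
    have := Nat.one_le_two_pow (n := n)
    omega

-- forward direction helper
lemma sum_subset_eq (r p : ℤ) (hrp : r < p) (S : Finset ℤ) (hS : S ⊆ Finset.Icc r (p-1)) :
    ∃ n : ℕ, n < 2 ^ (p - r).toNat ∧ ∑ i ∈ S, (2:ℝ)^i = (n : ℝ) * (2:ℝ)^r := by
  refine ⟨∑ i ∈ S, 2^((i - r).toNat), ?_, ?_⟩
  · have hinj : Set.InjOn (fun i : ℤ => (i - r).toNat) S := by
      intro i hi j hj hij
      have hi' := Finset.mem_Icc.1 (hS hi)
      have hj' := Finset.mem_Icc.1 (hS hj)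
      simp only at hij
      omega
    have := (Finset.sum_image (f := fun j : ℕ => 2^j) (g := fun i : ℤ => (i - r).toNat)
      (by intro i hi j hj hij; exact hinj hi hj hij)).symm
    rw [this]
    have hsub : S.image (fun i : ℤ => (i - r).toNat) ⊆ Finset.range (p - r).toNat := by
      intro j hj
      obtain ⟨i, hi, rfl⟩ := Finset.mem_image.1 hj
      have hi' := Finset.mem_Icc.1 (hS hi)
      simp only [Finset.mem_range]
      omega
    calc ∑ j ∈ S.image (fun i : ℤ => (i - r).toNat), 2^j
        ≤ ∑ j ∈ Finset.range (p - r).toNat, 2^j :=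
          Finset.sum_le_sum_of_subset hsub
      _ = 2 ^ (p - r).toNat - 1 := sum_range_two_pow _
      _ < 2 ^ (p - r).toNat := by have := Nat.one_le_two_pow (n := (p - r).toNat); omega
  · push_cast
    rw [Finset.sum_mul]
    apply Finset.sum_congr rfl
    intro i hi
    have hi' := Finset.mem_Icc.1 (hS hi)
    have h1 : ((i - r).toNat : ℤ) = i - r := Int.toNat_of_nonneg (by omega)
    rw [← zpow_natCast (2:ℝ) ((i - r).toNat), h1, ← zpow_add₀ (by norm_num : (2:ℝ) ≠ 0)]
    ring_nf

lemma exists_subset_of_lt (r p : ℤ) (hrp : r < p) (n : ℕ) (hn : n < 2 ^ (p - r).toNat) :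
    ∃ S ⊆ Finset.Icc r (p-1), ∑ i ∈ S, (2:ℝ)^i = (n : ℝ) * (2:ℝ)^r := by
  classical
  set T := n.bitIndices.toFinset with hT
  have hTsum : ∑ j ∈ T, 2^j = n := Finset.twoPowSum_toFinset_bitIndices n
  have hTsub : T ⊆ Finset.range (p - r).toNat := by
    intro j hj
    have h2j : 2^j ≤ n := hTsum ▸ Finset.single_le_sum (f := fun j : ℕ => 2^j)
      (fun _ _ => Nat.zero_le _) hj
    have : 2^j < 2^(p - r).toNat := lt_of_le_of_lt h2j hn
    simpa [Finset.mem_range] using (Nat.pow_lt_pow_iff_right (by norm_num : 1 < 2)).1 this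
  refine ⟨T.image (fun j : ℕ => r + (j : ℤ)), ?_, ?_⟩
  · intro i hi
    obtain ⟨j, hj, rfl⟩ := Finset.mem_image.1 hi
    have := Finset.mem_range.1 (hTsub hj)
    simp only [Finset.mem_Icc]
    omega
  · rw [Finset.sum_image (by intro i _ j _ h; simp only at h; omega)]
    have : ∀ j ∈ T, (2:ℝ)^(r + (j:ℤ)) = (2:ℝ)^(j:ℕ) * (2:ℝ)^r := by
      intro j _
      rw [zpow_add₀ (by norm_num : (2:ℝ) ≠ 0), ← zpow_natCast (2:ℝ) j]
      ring
    rw [Finset.sum_congr rfl this, ← Finset.sum_mul]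
    congr 1
    exact_mod_cast hTsum

lemma omegaSet_eq (r p : ℤ) (hrp : r < p) :
    omegaSet r p = Finset.image (fun m : ℤ => (m : ℝ) * (2:ℝ)^r)
      (Finset.Icc (-(2 ^ (p - r).toNat - 1) : ℤ) ((2:ℤ) ^ (p - r).toNat - 1)) := by
  classical
  have hone : (1:ℤ) ≤ (2:ℤ) ^ (p - r).toNat := one_le_pow₀ (by norm_num)
  ext x
  simp only [omegaSet, Finset.mem_union, Finset.mem_image, Finset.mem_powerset,
    Finset.mem_Icc]
  constructor
  · rintro (⟨S, hS, rfl⟩ | ⟨S, hS, rfl⟩)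
    · obtain ⟨n, hn, heq⟩ := sum_subset_eq r p hrp S hS
      have hn' : (n:ℤ) < (2:ℤ) ^ (p - r).toNat := by exact_mod_cast hn
      exact ⟨n, ⟨by omega, by omega⟩, by rw [heq]; push_cast; ring⟩
    · obtain ⟨n, hn, heq⟩ := sum_subset_eq r p hrp S hS
      have hn' : (n:ℤ) < (2:ℤ) ^ (p - r).toNat := by exact_mod_cast hn
      refine ⟨-n, ⟨by omega, by omega⟩, by rw [heq]; push_cast; ring⟩
  · rintro ⟨m, ⟨hm1, hm2⟩, rfl⟩
    rcases le_or_gt 0 m with hm | hm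
    · have hmn : m.toNat < 2 ^ (p - r).toNat := by
        have h1 : (m.toNat : ℤ) = m := Int.toNat_of_nonneg hm
        have : (m.toNat : ℤ) < (2:ℤ) ^ (p - r).toNat := by omega
        exact_mod_cast this
      obtain ⟨S, hS, heq⟩ := exists_subset_of_lt r p hrp m.toNat hmn
      refine Or.inl ⟨S, hS, ?_⟩
      rw [heq]
      congr 1
      exact_mod_cast congrArg (Int.cast : ℤ → ℝ) (Int.toNat_of_nonneg hm)
    · have hmn : (-m).toNat < 2 ^ (p - r).toNat := by
        have h1 : ((-m).toNat : ℤ) = -m := Int.toNat_of_nonneg (by omega)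
        have : ((-m).toNat : ℤ) < (2:ℤ) ^ (p - r).toNat := by omega
        exact_mod_cast this
      obtain ⟨S, hS, heq⟩ := exists_subset_of_lt r p hrp (-m).toNat hmn
      refine Or.inr ⟨S, hS, ?_⟩
      rw [heq]
      have : ((-m).toNat : ℝ) = -(m:ℝ) := by
        exact_mod_cast congrArg (Int.cast : ℤ → ℝ) (Int.toNat_of_nonneg (by omega : (0:ℤ) ≤ -m))
      rw [this]; ring

lemma floor_eq_on (h : ℝ) (hh : 0 < h) (m : ℤ) :
    ∀ x ∈ Set.Ico ((m:ℝ) * h) (((m:ℝ) + 1) * h), (⌊x / h⌋ : ℤ) = m := by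
  rintro x ⟨hx1, hx2⟩
  rw [Int.floor_eq_iff]
  constructor
  · exact (le_div_iff₀ hh).2 (by linarith)
  · push_cast
    exact (div_lt_iff₀ hh).2 (by linarith)

lemma ico_union (h : ℝ) (hh : 0 < h) (M : ℤ) :
    Set.Ico ((-M : ℤ) * h : ℝ) (((M : ℤ) + 1 : ℤ) * h) =
      ⋃ m ∈ Finset.Icc (-M) M, Set.Ico ((m:ℝ) * h) (((m:ℝ) + 1) * h) := by
  ext x
  simp only [Set.mem_iUnion, Finset.mem_Icc, Set.mem_Ico, exists_prop]
  constructor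
  · rintro ⟨hx1, hx2⟩
    refine ⟨⌊x / h⌋, ⟨?_, ?_⟩, ?_, ?_⟩
    · rw [Int.le_floor]
      push_cast
      exact (le_div_iff₀ hh).2 (by push_cast at hx1; linarith)
    · rw [← Int.lt_add_one_iff, Int.floor_lt]
      push_cast
      exact (div_lt_iff₀ hh).2 (by push_cast at hx2; linarith)
    · calc ((⌊x / h⌋ : ℝ)) * h ≤ x / h * h := by
            exact mul_le_mul_of_nonneg_right (Int.floor_le _) hh.le
        _ = x := div_mul_cancel₀ x hh.ne'
    · have := Int.lt_floor_add_one (x / h)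
      calc x = x / h * h := (div_mul_cancel₀ x hh.ne').symm
        _ < ((⌊x / h⌋ : ℝ) + 1) * h := by
            exact mul_lt_mul_of_pos_right this hh
  · rintro ⟨m, ⟨hm1, hm2⟩, hx1, hx2⟩
    have hm1' : ((-M : ℤ) : ℝ) ≤ (m : ℝ) := by exact_mod_cast hm1
    have hm2' : (m : ℝ) ≤ (M : ℝ) := by exact_mod_cast hm2
    constructor
    · push_cast
      calc (-(M:ℝ)) * h ≤ (m:ℝ) * h := mul_le_mul_of_nonneg_right (by push_cast at hm1'; linarith) hh.le
        _ ≤ x := hx1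
    · push_cast
      calc x < ((m:ℝ) + 1) * h := hx2
        _ ≤ ((M:ℝ) + 1) * h := mul_le_mul_of_nonneg_right (by linarith) hh.le

lemma riemann_step (G : ℝ → ℝ) (hG : Continuous G) (h : ℝ) (hh : 0 < h) (M : ℤ) :
    ∫ x, Set.indicator (Set.Ico (((-M : ℤ) : ℝ) * h) ((((M : ℤ) + 1 : ℤ) : ℝ) * h))
        (fun x => G ((⌊x / h⌋ : ℤ) * h)) x
      = ∑ m ∈ Finset.Icc (-M) M, h * G ((m : ℝ) * h) := by
  rw [MeasureTheory.integral_indicator measurableSet_Ico]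
  have hcongr : ∀ m : ℤ, Set.EqOn (fun x : ℝ => G ((⌊x / h⌋ : ℤ) * h))
      (fun _ => G ((m : ℝ) * h)) (Set.Ico ((m:ℝ) * h) (((m:ℝ) + 1) * h)) := by
    intro m x hx
    simp only
    rw [floor_eq_on h hh m x hx]
  have : Set.Ico (((-M:ℤ)) * h : ℝ) ((((M:ℤ) + 1 : ℤ)) * h) =
      ⋃ m ∈ Finset.Icc (-M) M, Set.Ico ((m:ℝ) * h) (((m:ℝ) + 1) * h) := ico_union h hh M
  rw [show ((((M : ℤ) + 1 : ℤ) : ℝ)) = ((M:ℤ):ℝ) + 1 by push_cast; ring] at this ⊢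
  rw [this]
  rw [MeasureTheory.integral_biUnion_finset _ (fun m _ => measurableSet_Ico)
      (fun m _ n _ hmn => by
        simp only [Function.onFun, Set.Ico_disjoint_Ico]
        rcases lt_or_gt_of_ne hmn with hlt | hlt
        · apply min_le_of_left_le
          apply le_max_of_le_right
          have : ((m:ℝ) + 1) ≤ (n:ℝ) := by exact_mod_cast hlt
          nlinarith
        · apply min_le_of_right_le
          apply le_max_of_le_left
          have : ((n:ℝ) + 1) ≤ (m:ℝ) := by exact_mod_cast hlt
          nlinarith)
      (fun m _ => by
        apply (integrableOn_const ?_).congr_fun (fun x hx => (hcongr m hx).symm) measurableSet_Ico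
        rw [Real.volume_Ico]
        exact ENNReal.ofReal_ne_top)]
  apply Finset.sum_congr rfl
  intro m _
  rw [MeasureTheory.setIntegral_congr_fun measurableSet_Ico (hcongr m),
    MeasureTheory.setIntegral_const, measureReal_def, Real.volume_Ico, smul_eq_mul]
  congr 1
  rw [ENNReal.toReal_ofReal (by nlinarith)]
  ring


section
variable (c m0 : ℝ)

lemma gauss_bound (hc : 0 < c) (x y : ℝ) (hxy : |y - x| ≤ 1) :
    Real.exp (-c * (y - m0)^2) ≤ Real.exp c * Real.exp (-(c/2) * (x - m0)^2) := by
  rw [← Real.exp_add]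
  apply Real.exp_le_exp.2
  have h1 : (x - m0)^2 ≤ 2 * (y - m0)^2 + 2 * (x - y)^2 := by
    nlinarith [sq_nonneg ((y - m0) - (x - y))]
  have h2 : (x - y)^2 ≤ 1 := by
    rw [← one_pow 2]
    exact sq_le_sq' (by cases abs_le.1 hxy; linarith) (by cases abs_le.1 hxy; linarith)
  nlinarith

end

lemma riemann_tendsto (f : BoundedContinuousFunction ℝ ℝ) (c m0 : ℝ) (hc : 0 < c)
    (rk pk : ℕ → ℤ) (hrk : Tendsto rk atTop atBot) (hpk : Tendsto pk atTop atTop)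
    (hrp : ∀ k, rk k < pk k) :
    Tendsto (fun k => ∑ m ∈ Finset.Icc (-((2:ℤ)^(pk k - rk k).toNat - 1))
        ((2:ℤ)^(pk k - rk k).toNat - 1),
        (2:ℝ)^(rk k) * (f ((m:ℝ) * (2:ℝ)^(rk k)) * Real.exp (-c * ((m:ℝ) * (2:ℝ)^(rk k) - m0)^2)))
      atTop
      (nhds (∫ x, f x * Real.exp (-c * (x - m0)^2))) := by
  set G : ℝ → ℝ := fun x => f x * Real.exp (-c * (x - m0)^2) with hG
  have hGcont : Continuous G := f.continuous.mul (by continuity)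
  set h : ℕ → ℝ := fun k => (2:ℝ)^(rk k) with hh
  have hhpos : ∀ k, 0 < h k := fun k => zpow_pos (by norm_num) _
  set M : ℕ → ℤ := fun k => (2:ℤ)^(pk k - rk k).toNat - 1 with hM
  set F : ℕ → ℝ → ℝ := fun k x =>
    Set.indicator (Set.Ico (((-M k : ℤ) : ℝ) * h k) ((((M k : ℤ) + 1 : ℤ) : ℝ) * h k))
      (fun x => G ((⌊x / h k⌋ : ℤ) * h k)) x with hF
  -- rewrite sums as integrals
  have hkey : ∀ k, ∑ m ∈ Finset.Icc (-M k) (M k), h k * G ((m:ℝ) * h k) = ∫ x, F k x := by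
    intro k
    exact (riemann_step G hGcont (h k) (hhpos k) (M k)).symm
  have hfun : (fun k => ∑ m ∈ Finset.Icc (-(M k)) (M k),
      h k * G ((m:ℝ) * h k)) = fun k => ∫ x, F k x := funext hkey
  rw [show (fun k => ∑ m ∈ Finset.Icc (-((2:ℤ)^(pk k - rk k).toNat - 1))
        ((2:ℤ)^(pk k - rk k).toNat - 1),
        (2:ℝ)^(rk k) * (f ((m:ℝ) * (2:ℝ)^(rk k)) * Real.exp (-c * ((m:ℝ) * (2:ℝ)^(rk k) - m0)^2)))
      = fun k => ∫ x, F k x from hfun]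
  -- dominated convergence
  have hh0 : Tendsto h atTop (nhds 0) := tendsto_two_zpow_atBot.comp hrk
  have hMh : Tendsto (fun k => ((M k : ℤ) : ℝ) * h k) atTop atTop := by
    have heq : ∀ k, ((M k : ℤ) : ℝ) * h k = (2:ℝ)^(pk k) - h k := by
      intro k
      have hN : ((pk k - rk k).toNat : ℤ) = pk k - rk k := Int.toNat_of_nonneg (by have := hrp k; omega)
      have : ((2:ℤ)^(pk k - rk k).toNat : ℝ) * h k = (2:ℝ)^(pk k) := by
        push_cast
        rw [hh, ← zpow_natCast (2:ℝ), hN, ← zpow_add₀ (by norm_num : (2:ℝ) ≠ 0)]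
        ring_nf
      have hM' : ((M k : ℤ) : ℝ) = ((2:ℤ)^(pk k - rk k).toNat : ℝ) - 1 := by
        rw [hM]; push_cast; ring
      rw [hM']
      push_cast at this ⊢
      nlinarith [this, hhpos k]
    simp only [heq]
    exact Tendsto.atTop_add (tendsto_two_zpow_atTop.comp hpk) (hh0.neg)
  apply tendsto_integral_filter_of_dominated_convergence
    (bound := fun x => ‖f‖ * Real.exp c * Real.exp (-(c/2) * (x - m0)^2))
  · -- measurability
    apply Eventually.of_forall
    intro k
    apply AEStronglyMeasurable.indicator _ measurableSet_Ico
    have hm : Measurable (fun x : ℝ => ((⌊x / h k⌋ : ℤ) : ℝ) * h k) :=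
      ((Measurable.of_discrete (f := fun z : ℤ => (z : ℝ))).comp
        (Int.measurable_floor.comp (measurable_id.div_const (h k)))).mul_const (h k)
    exact (hGcont.measurable.comp hm).aestronglyMeasurable
  · -- bound
    filter_upwards [hrk.eventually (eventually_le_atBot (0:ℤ))] with k hk0
    apply Eventually.of_forall
    intro x
    simp only [hF]
    by_cases hx : x ∈ Set.Ico (((-M k : ℤ) : ℝ) * h k) ((((M k : ℤ) + 1 : ℤ) : ℝ) * h k)
    · rw [Set.indicator_of_mem hx]
      set y := ((⌊x / h k⌋ : ℤ) : ℝ) * h k with hy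
      have hyx : |y - x| ≤ 1 := by
        have h1 : y ≤ x := by
          rw [hy]
          calc ((⌊x / h k⌋ : ℤ) : ℝ) * h k ≤ x / h k * h k :=
              mul_le_mul_of_nonneg_right (Int.floor_le _) (hhpos k).le
            _ = x := div_mul_cancel₀ x (hhpos k).ne'
        have h2 : x - h k ≤ y := by
          have := Int.lt_floor_add_one (x / h k)
          rw [hy]
          have : x / h k * h k < (((⌊x / h k⌋ : ℤ) : ℝ) + 1) * h k :=
            mul_lt_mul_of_pos_right this (hhpos k)
          rw [div_mul_cancel₀ x (hhpos k).ne'] at this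
          nlinarith
        have hk1 : h k ≤ 1 := by
          rw [hh]
          have h1 : (2:ℝ)^(rk k) ≤ (2:ℝ)^(0:ℤ) := zpow_le_zpow_right₀ (by norm_num) hk0
          simpa using h1
        rw [abs_le]
        constructor <;> nlinarith
      have hfb : |(f y : ℝ)| ≤ ‖f‖ := by
        have := f.norm_coe_le_norm y
        rwa [Real.norm_eq_abs] at this
      have hgb := gauss_bound c m0 hc x y hyx
      have hexp_pos : (0:ℝ) < Real.exp (-c * (y - m0)^2) := Real.exp_pos _
      rw [Real.norm_eq_abs, hG]
      simp only [abs_mul, abs_of_pos hexp_pos]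
      calc |(f y : ℝ)| * Real.exp (-c * (y - m0)^2)
          ≤ ‖f‖ * (Real.exp c * Real.exp (-(c/2) * (x - m0)^2)) := by
            apply mul_le_mul hfb hgb hexp_pos.le (norm_nonneg f)
        _ = ‖f‖ * Real.exp c * Real.exp (-(c/2) * (x - m0)^2) := by ring
    · rw [Set.indicator_of_notMem hx]
      simp only [norm_zero]
      positivity
  · -- bound integrable
    apply Integrable.const_mul
    have : Integrable (fun x : ℝ => Real.exp (-(c/2) * x^2)) := integrable_exp_neg_mul_sq (by linarith)
    exact Integrable.comp_sub_right this m0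
  · -- pointwise limit
    apply Eventually.of_forall
    intro x
    have hmem : ∀ᶠ k in atTop, x ∈ Set.Ico (((-M k : ℤ) : ℝ) * h k) ((((M k : ℤ) + 1 : ℤ) : ℝ) * h k) := by
      filter_upwards [hMh.eventually (eventually_gt_atTop |x|)] with k hk
      have h1 := abs_lt.1 hk  -- no; hk : |x| < M k * h k
      constructor
      · push_cast
        have := (abs_lt.1 hk).1
        nlinarith [hhpos k]
      · push_cast
        have := (abs_lt.1 hk).2
        nlinarith [hhpos k]
    have hfloor : Tendsto (fun k => ((⌊x / h k⌋ : ℤ) : ℝ) * h k) atTop (nhds x) := by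
      apply tendsto_of_tendsto_of_tendsto_of_le_of_le (g := fun k => x - h k) (h := fun _ => x)
      · simpa using (tendsto_const_nhds (x := x)).sub hh0
      · exact tendsto_const_nhds
      · intro k
        have := Int.lt_floor_add_one (x / h k)
        have h2 : x / h k * h k < (((⌊x / h k⌋ : ℤ) : ℝ) + 1) * h k :=
          mul_lt_mul_of_pos_right this (hhpos k)
        rw [div_mul_cancel₀ x (hhpos k).ne'] at h2
        nlinarith
      · intro k
        calc ((⌊x / h k⌋ : ℤ) : ℝ) * h k ≤ x / h k * h k :=
            mul_le_mul_of_nonneg_right (Int.floor_le _) (hhpos k).le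
          _ = x := div_mul_cancel₀ x (hhpos k).ne'
    have := (hGcont.tendsto x).comp hfloor
    apply Tendsto.congr' _ this
    filter_upwards [hmem] with k hk
    simp only [hF, Function.comp]
    rw [Set.indicator_of_mem hk]

/-- The Boltzmann distribution on a finite set `S` with inverse-temperature parameter `β` and
target function `H`: the probability of `x ∈ S` is `e^{-β²H(x)} / Σ_{y∈S} e^{-β²H(y)}`. -/
noncomputable def boltzmann (β : ℝ) (S : Finset ℝ) (H : ℝ → ℝ) : Measure ℝ :=
  ∑ x ∈ S,
    (ENNReal.ofReal (Real.exp (-β ^ 2 * H x) / ∑ y ∈ S, Real.exp (-β ^ 2 * H y))) •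
      Measure.dirac x

lemma integral_boltzmann (β : ℝ) (S : Finset ℝ) (H : ℝ → ℝ) (f : BoundedContinuousFunction ℝ ℝ) :
    ∫ x, f x ∂(boltzmann β S H)
      = ∑ x ∈ S, (Real.exp (-β^2 * H x) / ∑ y ∈ S, Real.exp (-β^2 * H y)) * f x := by
  rw [boltzmann, integral_finset_sum_measure]
  · apply Finset.sum_congr rfl
    intro x _
    rw [integral_smul_measure, integral_dirac, ENNReal.toReal_ofReal (by positivity), smul_eq_mul]
  · intro x _
    exact (f.integrable _).smul_measure ENNReal.ofReal_ne_top

lemma integral_gaussianReal_eq (m0 : ℝ) (v : NNReal) (hv : v ≠ 0) (f : BoundedContinuousFunction ℝ ℝ) :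
    ∫ x, f x ∂(gaussianReal m0 v) = ∫ x, gaussianPDFReal m0 v x * f x := by
  rw [gaussianReal_of_var_ne_zero m0 hv]
  have hd : (gaussianPDF m0 v) = fun x => ((gaussianPDFReal m0 v x).toNNReal : ENNReal) := by
    funext x; rfl
  rw [hd, integral_withDensity_eq_integral_smul ((measurable_gaussianPDFReal m0 v).real_toNNReal)]
  congr 1; funext x
  rw [NNReal.smul_def, smul_eq_mul, Real.coe_toNNReal _ (gaussianPDFReal_nonneg m0 v x)]

lemma pdf_eq (c : ℝ) (hc : 0 < c) (m0 x : ℝ) :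
    gaussianPDFReal m0 (Real.toNNReal (1/(2*c))) x
      = Real.exp (-c * (x - m0)^2) / Real.sqrt (Real.pi / c) := by
  rw [gaussianPDFReal]
  have hv : ((Real.toNNReal (1/(2*c)) : NNReal) : ℝ) = 1/(2*c) := Real.coe_toNNReal _ (by positivity)
  rw [hv]
  have h1 : 2 * Real.pi * (1/(2*c)) = Real.pi / c := by field_simp
  have h2 : -(x - m0)^2 / (2 * (1/(2*c))) = -c * (x - m0)^2 := by field_simp
  rw [h1, h2]
  rw [eq_div_iff (by positivity : Real.sqrt (Real.pi / c) ≠ 0)]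
  field_simp

lemma integral_g (c : ℝ) (hc : 0 < c) (m0 : ℝ) :
    ∫ x : ℝ, Real.exp (-c * (x - m0)^2) = Real.sqrt (Real.pi / c) := by
  rw [← integral_gaussian c]
  exact integral_sub_right_eq_self (fun x => Real.exp (-c * x^2)) m0

lemma key_eq (a b β : ℝ) (ha : a ≠ 0) (r p : ℤ) (hrp : r < p)
    (f : BoundedContinuousFunction ℝ ℝ) :
    ∫ x, f x ∂(boltzmann β (omegaSet r p) fun x => (a * x - b) ^ 2)
      = (∑ m ∈ Finset.Icc (-((2:ℤ)^(p - r).toNat - 1)) ((2:ℤ)^(p - r).toNat - 1),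
           (2:ℝ)^r * (f ((m:ℝ) * (2:ℝ)^r) * Real.exp (-(β^2*a^2) * ((m:ℝ) * (2:ℝ)^r - b/a)^2)))
        / (∑ m ∈ Finset.Icc (-((2:ℤ)^(p - r).toNat - 1)) ((2:ℤ)^(p - r).toNat - 1),
           (2:ℝ)^r * ((BoundedContinuousFunction.const ℝ (1:ℝ)) ((m:ℝ) * (2:ℝ)^r)
             * Real.exp (-(β^2*a^2) * ((m:ℝ) * (2:ℝ)^r - b/a)^2))) := by
  have hZpow : ((2:ℝ))^r ≠ 0 := (zpow_pos (by norm_num : (0:ℝ) < 2) r).ne'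
  have hexp : ∀ x : ℝ, Real.exp (-β^2 * (a * x - b)^2)
      = Real.exp (-(β^2*a^2) * (x - b/a)^2) := by
    intro x
    congr 1
    field_simp
  have hinj : ∀ x ∈ Finset.Icc (-((2:ℤ)^(p - r).toNat - 1)) ((2:ℤ)^(p - r).toNat - 1),
      ∀ y ∈ Finset.Icc (-((2:ℤ)^(p - r).toNat - 1)) ((2:ℤ)^(p - r).toNat - 1),
      (fun m : ℤ => (m:ℝ) * (2:ℝ)^r) x = (fun m : ℤ => (m:ℝ) * (2:ℝ)^r) y → x = y := by
    intro x _ y _ hxy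
    simp only at hxy
    have : (x:ℝ) = (y:ℝ) := mul_right_cancel₀ hZpow hxy
    exact_mod_cast this
  rw [integral_boltzmann, omegaSet_eq r p hrp]
  rw [Finset.sum_image hinj, Finset.sum_image hinj]
  simp only [BoundedContinuousFunction.const_apply', one_mul, hexp]
  rw [← Finset.mul_sum, ← Finset.mul_sum, mul_div_mul_left _ _ hZpow]
  have hM0 : (0:ℤ) ≤ (2:ℤ)^(p - r).toNat - 1 := by
    have : (1:ℤ) ≤ (2:ℤ)^(p - r).toNat := one_le_pow₀ (by norm_num)
    omega
  have hZne : (∑ m ∈ Finset.Icc (-((2:ℤ)^(p - r).toNat - 1)) ((2:ℤ)^(p - r).toNat - 1),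
      Real.exp (-(β^2*a^2) * ((m:ℝ) * (2:ℝ)^r - b/a)^2)) ≠ 0 := by
    apply ne_of_gt
    apply Finset.sum_pos (fun _ _ => Real.exp_pos _)
    exact ⟨0, Finset.mem_Icc.2 ⟨by omega, by omega⟩⟩
  rw [Finset.sum_div]
  apply Finset.sum_congr rfl
  intro m _
  field_simp

/-- As `p → +∞` and `r → -∞`, the Boltzmann distributions `B(β, Ω_{r,p}, (ax-b)²)` converge
in distribution to the normal law `N(b/a, 1/(2a²β²))`. -/
theorem boltzmann_tendsto_gaussian
    (a b β : ℝ) (ha : a ≠ 0) (hβ : 0 < β)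
    (rk pk : ℕ → ℤ) (hrk : Tendsto rk atTop atBot) (hpk : Tendsto pk atTop atTop)
    (hrp : ∀ k, rk k < pk k) :
    ∀ f : BoundedContinuousFunction ℝ ℝ,
      Tendsto
        (fun k => ∫ x, f x ∂(boltzmann β (omegaSet (rk k) (pk k)) fun x => (a * x - b) ^ 2))
        atTop
        (nhds (∫ x, f x ∂(gaussianReal (b / a) (Real.toNNReal (1 / (2 * a ^ 2 * β ^ 2)))))) := by
  intro f
  have hc : (0:ℝ) < β^2*a^2 := by positivity
  have hA := riemann_tendsto f (β^2*a^2) (b/a) hc rk pk hrk hpk hrp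
  have hB := riemann_tendsto (BoundedContinuousFunction.const ℝ (1:ℝ)) (β^2*a^2) (b/a) hc
    rk pk hrk hpk hrp
  have hIpos : (0:ℝ) < Real.sqrt (Real.pi / (β^2*a^2)) := Real.sqrt_pos.2 (by positivity)
  have hBI : Tendsto (fun k => ∑ m ∈ Finset.Icc (-((2:ℤ)^(pk k - rk k).toNat - 1))
      ((2:ℤ)^(pk k - rk k).toNat - 1),
      (2:ℝ)^(rk k) * ((BoundedContinuousFunction.const ℝ (1:ℝ)) ((m:ℝ) * (2:ℝ)^(rk k))
        * Real.exp (-(β^2*a^2) * ((m:ℝ) * (2:ℝ)^(rk k) - b/a)^2))) atTop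
      (nhds (Real.sqrt (Real.pi / (β^2*a^2)))) := by
    have := integral_g (β^2*a^2) hc (b/a)
    simpa only [BoundedContinuousFunction.const_apply', one_mul, this] using hB
  have hlim := hA.div hBI hIpos.ne'
  -- identify the limit with the gaussian integral
  have hv : Real.toNNReal (1 / (2 * a ^ 2 * β ^ 2)) = Real.toNNReal (1/(2*(β^2*a^2))) := by
    ring_nf
  have hvne : Real.toNNReal (1/(2*(β^2*a^2))) ≠ 0 := by
    exact ne_of_gt (Real.toNNReal_pos.2 (by positivity))
  have hgauss : ∫ x, f x ∂(ProbabilityTheory.gaussianReal (b / a)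
      (Real.toNNReal (1 / (2 * a ^ 2 * β ^ 2))))
      = (∫ x, f x * Real.exp (-(β^2*a^2) * (x - b/a)^2)) / Real.sqrt (Real.pi / (β^2*a^2)) := by
    rw [hv, integral_gaussianReal_eq _ _ hvne f]
    have : (fun x => ProbabilityTheory.gaussianPDFReal (b/a) (Real.toNNReal (1/(2*(β^2*a^2)))) x * f x)
        = fun x => (Real.sqrt (Real.pi / (β^2*a^2)))⁻¹ * (f x * Real.exp (-(β^2*a^2) * (x - b/a)^2)) := by
      funext x
      rw [pdf_eq (β^2*a^2) hc (b/a) x]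
      field_simp
    rw [this, MeasureTheory.integral_const_mul, inv_mul_eq_div]
  rw [hgauss]
  exact Tendsto.congr (fun k => (key_eq a b β ha (rk k) (pk k) (hrp k) f).symm) hlim
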